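/- In the setting of the previous lifting theorem (adjunction (L ⊣ R, η, ε) : C ⇄ D restricting to subcategories, natural isomorphism α : Ψ∘L ⇒ L∘Φ, and β := RΨε ∘ (α^{-1})‾R), if moreover C' = Fix_η(C) and D' = Fix_ε(D), then the adjunction (Alg_{L,α} ⊣ Alg_{R,β}) : Alg(Φ)|Fix_η(C) ⇄ Alg(Ψ)|Fix_ε(D) is an adjoint equivalence (its unit and counit are natural isomorphisms). -/

import Mathlib

/-!
STATEMENT 3: In the setting of the lifting theorem (adjunction `(L ⊣ R, η, ε) : C ⇄ D`
restricting to subcategories, natural isomorphism `α : Ψ∘L ⇒ L∘Φ`, and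
`β := RΨε ∘ (α⁻¹)‾R`), if moreover `C' = Fix_η(C)` and `D' = Fix_ε(D)`, then the adjunction
`(Alg_{L,α} ⊣ Alg_{R,β}) : Alg(Φ)|Fix_η(C) ⇄ Alg(Ψ)|Fix_ε(D)` is an adjoint equivalence
(its unit and counit are natural isomorphisms).
-/

open CategoryTheory

universe v₁ v₂ u₁ u₂

variable {C : Type u₁} [Category.{v₁} C] {D : Type u₂} [Category.{v₂} D]

/-- The restriction of the category of `Φ`-algebras to the full subcategory given by `P`. -/
abbrev AlgSub (Φ : C ⥤ C) (P : C → Prop) :=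
  ObjectProperty.FullSubcategory (fun A : Endofunctor.Algebra Φ => P A.a)

/-- The lifted functor `Alg_{L,α}` sending `(X, a)` to `(LX, La ∘ α_X)` and `f` to `Lf`. -/
def algMap (Φ : C ⥤ C) (Ψ : D ⥤ D) (P : C → Prop) (Q : D → Prop)
    (L : C ⥤ D) (hL : ∀ X : C, P X → Q (L.obj X))
    (α : ObjectProperty.ι P ⋙ L ⋙ Ψ ⟶ ObjectProperty.ι P ⋙ Φ ⋙ L) :
    AlgSub Φ P ⥤ AlgSub Ψ Q where
  obj A := ⟨⟨L.obj A.obj.a, α.app ⟨A.obj.a, A.property⟩ ≫ L.map A.obj.str⟩, hL _ A.property⟩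
  map {A B} f :=
    ObjectProperty.homMk
    { f := L.map (Endofunctor.Algebra.Hom.f f.hom)
      h := by
        have hn := α.naturality (X := ⟨A.obj.a, A.property⟩) (Y := ⟨B.obj.a, B.property⟩)
          (ObjectProperty.homMk (Endofunctor.Algebra.Hom.f f.hom))
        have hf := Endofunctor.Algebra.Hom.h f.hom
        dsimp at hn ⊢
        rw [← Category.assoc, hn, Category.assoc, ← L.map_comp, hf, L.map_comp, Category.assoc] }
  map_id A := by
    ext
    show L.map (𝟙 A.obj.a) = 𝟙 (L.obj A.obj.a)
    simp
  map_comp {A B E} f g := by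
    ext
    show L.map (Endofunctor.Algebra.Hom.f f.hom ≫ Endofunctor.Algebra.Hom.f g.hom) =
      L.map (Endofunctor.Algebra.Hom.f f.hom) ≫ L.map (Endofunctor.Algebra.Hom.f g.hom)
    simp

/-- `L` maps `Fix_η(C)` into `Fix_ε(D)`. -/
theorem isIso_counit_app_of_isIso_unit_app {L : C ⥤ D} {R : D ⥤ C} (adj : L ⊣ R)
    (X : C) (h : IsIso (adj.unit.app X)) : IsIso (adj.counit.app (L.obj X)) := by
  haveI := h
  haveI : IsIso (L.map (adj.unit.app X) ≫ adj.counit.app (L.obj X)) := by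
    rw [adj.left_triangle_components X]; exact IsIso.id _
  exact IsIso.of_isIso_comp_left (L.map (adj.unit.app X)) (adj.counit.app (L.obj X))

/-- `R` maps `Fix_ε(D)` into `Fix_η(C)`. -/
theorem isIso_unit_app_of_isIso_counit_app {L : C ⥤ D} {R : D ⥤ C} (adj : L ⊣ R)
    (Y : D) (h : IsIso (adj.counit.app Y)) : IsIso (adj.unit.app (R.obj Y)) := by
  haveI := h
  haveI : IsIso (adj.unit.app (R.obj Y) ≫ R.map (adj.counit.app Y)) := by
    rw [adj.right_triangle_components Y]; exact IsIso.id _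
  exact IsIso.of_isIso_comp_right (adj.unit.app (R.obj Y)) (R.map (adj.counit.app Y))

theorem stmt3 (Φ : C ⥤ C) (Ψ : D ⥤ D)
    (L : C ⥤ D) (R : D ⥤ C) (adj : L ⊣ R)
    (α : ObjectProperty.ι (fun X : C => IsIso (adj.unit.app X)) ⋙ L ⋙ Ψ ⟶
         ObjectProperty.ι (fun X : C => IsIso (adj.unit.app X)) ⋙ Φ ⋙ L)
    [IsIso α]
    (β : ObjectProperty.ι (fun Y : D => IsIso (adj.counit.app Y)) ⋙ R ⋙ Φ ⟶
         ObjectProperty.ι (fun Y : D => IsIso (adj.counit.app Y)) ⋙ Ψ ⋙ R)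
    (hβ : ∀ Y : ObjectProperty.FullSubcategory (fun Y : D => IsIso (adj.counit.app Y)),
      β.app Y = adj.unit.app (Φ.obj (R.obj Y.obj)) ≫
        R.map ((inv α).app
          ⟨R.obj Y.obj, isIso_unit_app_of_isIso_counit_app adj Y.obj Y.property⟩) ≫
        R.map (Ψ.map (adj.counit.app Y.obj))) :
    ∃ adj' : algMap Φ Ψ _ _ L (fun X => isIso_counit_app_of_isIso_unit_app adj X) α ⊣
             algMap Ψ Φ _ _ R (fun Y => isIso_unit_app_of_isIso_counit_app adj Y) β,
      (∀ A : AlgSub Φ (fun X : C => IsIso (adj.unit.app X)),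
        Endofunctor.Algebra.Hom.f (adj'.unit.app A).hom = adj.unit.app A.obj.a) ∧
      (∀ B : AlgSub Ψ (fun Y : D => IsIso (adj.counit.app Y)),
        Endofunctor.Algebra.Hom.f (adj'.counit.app B).hom = adj.counit.app B.obj.a) ∧
      IsIso adj'.unit ∧ IsIso adj'.counit := by
  classical
  let F := algMap Φ Ψ (fun X : C => IsIso (adj.unit.app X))
    (fun Y : D => IsIso (adj.counit.app Y)) L (fun X => isIso_counit_app_of_isIso_unit_app adj X) α
  let G := algMap Ψ Φ (fun Y : D => IsIso (adj.counit.app Y))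
    (fun X : C => IsIso (adj.unit.app X)) R (fun Y => isIso_unit_app_of_isIso_counit_app adj Y) β
  have unit_h : ∀ A : AlgSub Φ (fun X : C => IsIso (adj.unit.app X)),
      Φ.map (adj.unit.app A.obj.a) ≫ (G.obj (F.obj A)).obj.str
        = A.obj.str ≫ adj.unit.app A.obj.a := by
    intro A
    obtain ⟨⟨X, a⟩, hX⟩ := A
    dsimp [F, G, algMap]
    rw [hβ]
    dsimp
    have h1 := adj.unit.naturality (Φ.map (adj.unit.app X))
    dsimp at h1
    have h2 := (inv α).naturality
      (X := ⟨X, hX⟩)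
      (Y := ⟨R.obj (L.obj X), isIso_unit_app_of_isIso_counit_app adj (L.obj X)
        (isIso_counit_app_of_isIso_unit_app adj X hX)⟩)
      (ObjectProperty.homMk (adj.unit.app X))
    dsimp at h2
    have h4 : (inv α).app ⟨X, hX⟩ ≫ α.app ⟨X, hX⟩ = 𝟙 _ := by simp
    have h5 := adj.unit.naturality a
    dsimp at h5
    simp only [R.map_comp, Category.assoc]
    rw [← Category.assoc, h1, Category.assoc]
    rw [← Category.assoc (R.map (L.map (Φ.map (adj.unit.app X)))), ← R.map_comp, h2,
      R.map_comp, Category.assoc]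
    rw [← Category.assoc (R.map (Ψ.map (L.map (adj.unit.app X)))), ← R.map_comp,
      ← Ψ.map_comp, adj.left_triangle_components X]
    rw [show Ψ.map (𝟙 (L.obj X)) = 𝟙 (Ψ.obj (L.obj X)) from Ψ.map_id _,
      show R.map (𝟙 (Ψ.obj (L.obj X))) = 𝟙 (R.obj (Ψ.obj (L.obj X))) from R.map_id _,
      ]
    simp
  have counit_h : ∀ B : AlgSub Ψ (fun Y : D => IsIso (adj.counit.app Y)),
      Ψ.map (adj.counit.app B.obj.a) ≫ B.obj.str
        = (F.obj (G.obj B)).obj.str ≫ adj.counit.app B.obj.a := by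
    intro B
    obtain ⟨⟨Y, b⟩, hY⟩ := B
    dsimp [F, G, algMap]
    rw [hβ]
    dsimp
    have h1 := adj.counit.naturality b
    dsimp at h1
    have h2 := adj.counit.naturality (Ψ.map (adj.counit.app Y))
    dsimp at h2
    have h3 := adj.counit.naturality
      ((inv α).app ⟨R.obj Y, isIso_unit_app_of_isIso_counit_app adj Y hY⟩)
    dsimp at h3
    have h5 : α.app ⟨R.obj Y, isIso_unit_app_of_isIso_counit_app adj Y hY⟩ ≫
        (inv α).app ⟨R.obj Y, isIso_unit_app_of_isIso_counit_app adj Y hY⟩ = 𝟙 _ := by simp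
    simp only [L.map_comp, Category.assoc]
    rw [h1, reassoc_of% h2, reassoc_of% h3, adj.left_triangle_components_assoc]
    rw [reassoc_of% h5]
  let ηA : 𝟭 (AlgSub Φ (fun X : C => IsIso (adj.unit.app X))) ⟶ F ⋙ G :=
    { app := fun A => ObjectProperty.homMk { f := adj.unit.app A.obj.a, h := unit_h A }
      naturality := fun A B f => by
        refine ObjectProperty.hom_ext (h := Endofunctor.Algebra.ext ?_)
        have := adj.unit.naturality (Endofunctor.Algebra.Hom.f f.hom)
        dsimp [F, G, algMap] at this ⊢
        exact this }
  let εA : G ⋙ F ⟶ 𝟭 (AlgSub Ψ (fun Y : D => IsIso (adj.counit.app Y))) :=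
    { app := fun B => ObjectProperty.homMk { f := adj.counit.app B.obj.a, h := counit_h B }
      naturality := fun A B f => by
        refine ObjectProperty.hom_ext (h := Endofunctor.Algebra.ext ?_)
        have := adj.counit.naturality (Endofunctor.Algebra.Hom.f f.hom)
        dsimp [F, G, algMap] at this ⊢
        exact this }
  refine ⟨⟨ηA, εA, ?_, ?_⟩, fun A => rfl, fun B => rfl, ?_, ?_⟩
  · intro A
    refine ObjectProperty.hom_ext (h := Endofunctor.Algebra.ext ?_)
    have := adj.left_triangle_components A.obj.a
    dsimp [F, G, algMap, ηA, εA] at this ⊢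
    exact this
  · intro B
    refine ObjectProperty.hom_ext (h := Endofunctor.Algebra.ext ?_)
    have := adj.right_triangle_components B.obj.a
    dsimp [F, G, algMap, ηA, εA] at this ⊢
    exact this
  · haveI : ∀ A, IsIso (ηA.app A) := fun A => by
      haveI : IsIso (Endofunctor.Algebra.Hom.f
          ((ObjectProperty.ι _).map (ηA.app A))) := A.property
      haveI : IsIso ((ObjectProperty.ι _).map (ηA.app A)) :=
        Endofunctor.Algebra.iso_of_iso _
      exact isIso_of_fully_faithful (ObjectProperty.ι _) (ηA.app A)
    exact NatIso.isIso_of_isIso_app ηA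
  · haveI : ∀ B, IsIso (εA.app B) := fun B => by
      haveI : IsIso (Endofunctor.Algebra.Hom.f
          ((ObjectProperty.ι _).map (εA.app B))) := B.property
      haveI : IsIso ((ObjectProperty.ι _).map (εA.app B)) :=
        Endofunctor.Algebra.iso_of_iso _
      exact isIso_of_fully_faithful (ObjectProperty.ι _) (εA.app B)
    exact NatIso.isIso_of_isIso_app εA
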